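/- There is a constant C > 0 depending only on K such that every axis-parallel unit cube Q ⊂ ℝ^{#S} contains at most C points of any translate of Log(O_K^×), where Log(u) = (d_ν log|ι_ν(u)|)_{ν∈S}. More precisely, the bound #(translate of Log(O_K^×) ∩ Q) ≤ √2 / R_K + O_K(1) holds, where R_K is the regulator of K. -/
import Mathlib


open NumberField NumberField.InfinitePlace

noncomputable section

namespace RogersNF

variable (K : Type) [Field K] [NumberField K]

/-- The logarithmic embedding `Log(u) = (d_ν log|ι_ν(u)|)_{ν ∈ S}` of the units. -/
def logEmb (u : (𝓞 K)ˣ) : InfinitePlace K → ℝ :=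
  fun w => (w.mult : ℝ) * Real.log (w (algebraMap (𝓞 K) K (u : 𝓞 K)))

open NumberField.Units NumberField.Units.dirichletUnitTheorem in
lemma sum_logEmb_eq_zero (u : (𝓞 K)ˣ) : ∑ w, logEmb K u w = 0 := by
  have h := congr_arg Real.log (prod_eq_abs_norm (algebraMap (𝓞 K) K (u : 𝓞 K)))
  rw [show algebraMap (𝓞 K) K (u : 𝓞 K) = ((u : 𝓞 K) : K) from rfl] at h
  rw [Units.norm, Rat.cast_one, Real.log_one, Real.log_prod] at h
  · simpa [logEmb, Real.log_pow] using h
  · exact fun w _ => pow_ne_zero _ (AbsoluteValue.ne_zero _ (coe_ne_zero u))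

open NumberField.Units NumberField.Units.dirichletUnitTheorem in
lemma logEmb_apply (u : (𝓞 K)ˣ) (w : {w : InfinitePlace K // w ≠ w₀}) :
    logEmb K u w.val = logEmbedding K (Additive.ofMul u) w := rfl

open NumberField.Units NumberField.Units.dirichletUnitTheorem in
/-- **Any translate of `Log(𝓞_K^×)` meets any axis-parallel unit cube of `ℝ^{#S}` in at most
`√2/R_K + O_K(1)` points, where `R_K` is the regulator.** -/
theorem card_units_in_cube :
    ∃ C : ℝ, 0 < C ∧
      (∃ C₂ : ℝ, C = Real.sqrt 2 / NumberField.Units.regulator K + C₂) ∧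
      ∀ t v : InfinitePlace K → ℝ,
        (Nat.card {x : InfinitePlace K → ℝ //
            (∃ u : (𝓞 K)ˣ, x = t + logEmb K u) ∧ ∀ w, v w ≤ x w ∧ x w ≤ v w + 1} : ℝ)
          ≤ C := by
  classical
  have hT : ((unitLattice K : Set ({w : InfinitePlace K // w ≠ w₀} → ℝ)) ∩
      Metric.closedBall 0 1).Finite := unitLattice_inter_ball_finite K 1
  have hfinT : Finite ↥((unitLattice K : Set ({w : InfinitePlace K // w ≠ w₀} → ℝ)) ∩
      Metric.closedBall 0 1) := hT.to_subtype
  set N : ℕ := Nat.card ↥((unitLattice K : Set ({w : InfinitePlace K // w ≠ w₀} → ℝ)) ∩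
      Metric.closedBall 0 1) with hN
  have hreg : 0 < Real.sqrt 2 / NumberField.Units.regulator K :=
    div_pos (Real.sqrt_pos.mpr (by norm_num)) (regulator_pos K)
  refine ⟨Real.sqrt 2 / NumberField.Units.regulator K + (N : ℝ), by positivity,
    ⟨(N : ℝ), rfl⟩, fun t v => ?_⟩
  set A := {x : InfinitePlace K → ℝ //
      (∃ u : (𝓞 K)ˣ, x = t + logEmb K u) ∧ ∀ w, v w ≤ x w ∧ x w ≤ v w + 1}
  rcases isEmpty_or_nonempty A with hA | hA
  · rw [Nat.card_of_isEmpty, Nat.cast_zero]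
    positivity
  · obtain ⟨x₀⟩ := hA
    -- the difference map into the lattice points of the ball of radius 1
    have key : ∀ x : A, (fun w : {w : InfinitePlace K // w ≠ w₀} => x.val w.val - x₀.val w.val) ∈
        (unitLattice K : Set ({w : InfinitePlace K // w ≠ w₀} → ℝ)) ∩ Metric.closedBall 0 1 := by
      rintro ⟨x, ⟨u, hu⟩, hx⟩
      obtain ⟨⟨u₀, hu₀⟩, hx₀⟩ := x₀.prop
      constructor
      · refine ⟨Additive.ofMul (u * u₀⁻¹), Submodule.mem_top, ?_⟩
        ext w
        have : Additive.ofMul (u * u₀⁻¹) = Additive.ofMul u + (- Additive.ofMul u₀) := by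
          rw [ofMul_mul, ofMul_inv]
        rw [this, map_add, map_neg]
        simp only [Pi.add_apply, Pi.neg_apply, ← logEmb_apply, hu, hu₀, Pi.add_apply]
        simp only [AddMonoidHom.coe_toIntLinearMap]
        rw [← logEmb_apply, ← logEmb_apply]
        ring
      · rw [Metric.mem_closedBall, dist_zero_right]
        refine pi_norm_le_iff_of_nonneg zero_le_one |>.mpr fun w => ?_
        rw [Real.norm_eq_abs, abs_le]
        have h1 := hx w.val
        have h2 := x₀.prop.2 w.val
        constructor <;> linarith [h1.1, h1.2, h2.1, h2.2]
    have hinj : Function.Injective (fun x : A =>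
        (⟨_, key x⟩ : ↥((unitLattice K : Set ({w : InfinitePlace K // w ≠ w₀} → ℝ)) ∩
          Metric.closedBall 0 1))) := by
      rintro x y hxy
      have hcoord : ∀ w : {w : InfinitePlace K // w ≠ w₀}, x.val w.val = y.val w.val := by
        intro w
        have := congrFun (Subtype.ext_iff.mp hxy) w
        dsimp at this
        linarith
      -- sums of all coordinates agree
      have hsum : ∑ w, x.val w = ∑ w, y.val w := by
        obtain ⟨u, hu⟩ := x.prop.1
        obtain ⟨u', hu'⟩ := y.prop.1
        rw [hu, hu']
        simp only [Pi.add_apply, Finset.sum_add_distrib, sum_logEmb_eq_zero]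
      have hw₀ : x.val w₀ = y.val w₀ := by
        have hx' : ∑ w, x.val w = x.val w₀ + ∑ w ∈ Finset.univ.erase w₀, x.val w := by
          rw [← Finset.add_sum_erase _ _ (Finset.mem_univ w₀)]
        have hy' : ∑ w, y.val w = y.val w₀ + ∑ w ∈ Finset.univ.erase w₀, y.val w := by
          rw [← Finset.add_sum_erase _ _ (Finset.mem_univ w₀)]
        have herase : ∑ w ∈ Finset.univ.erase w₀, x.val w
            = ∑ w ∈ Finset.univ.erase w₀, y.val w := by
          refine Finset.sum_congr rfl fun w hw => ?_
          exact hcoord ⟨w, Finset.ne_of_mem_erase hw⟩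
        rw [hx', hy', herase] at hsum
        linarith
      ext w
      by_cases hw : w = w₀
      · rw [hw]; exact hw₀
      · exact hcoord ⟨w, hw⟩
    have hle : Nat.card A ≤ N := Nat.card_le_card_of_injective _ hinj
    calc (Nat.card A : ℝ) ≤ (N : ℝ) := Nat.cast_le.mpr hle
      _ ≤ Real.sqrt 2 / NumberField.Units.regulator K + (N : ℝ) := by linarith

end RogersNF
end
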